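/- Let V be a finite nonempty subset of the rootless binary tree S, let x ∉ V be a vertex having exactly one neighbour in V, and set W = V ∪ {x}. Let μ_V and μ_W be the uniform probability measures on 𝒜_V and 𝒜_W respectively, and let f : Ω_V → ℝ (regarded as a function on Ω_W via restriction of configurations to V). Then |E_{μ_W}[f] − E_{μ_V}[f]| ≤ |E_{μ_W}[f·1{ζ(x)=3}] − E_{μ_W}[f]·μ_W(ζ(x)=3)| / μ_W(ζ(x)=3), the bound being the truncated correlation of f with the event {ζ(x)=3} divided by the probability of that event. -/

import Mathlib

open Finset

/-- `S` is the vertex set of the rootless binary tree: a connected acyclic simple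
graph in which every vertex has exactly 3 neighbours. -/
def IsBinaryTree {S : Type*} (G : SimpleGraph S) : Prop :=
  G.Connected ∧ G.IsAcyclic ∧ ∀ v : S, {w : S | G.Adj v w}.ncard = 3

variable {S : Type*} [DecidableEq S]

/-- Toppling at site `x` inside the finite volume `V`: `x` loses 3 grains and each
neighbour of `x` lying in `V` receives one grain (grains sent outside `V` are lost). -/
def toppleAt (G : SimpleGraph S) [DecidableRel G.Adj] (V : Finset S)
    (η : S → ℕ) (x : S) : S → ℕ :=
  fun y => if y = x then η x - 3 else if y ∈ V ∧ G.Adj x y then η y + 1 else η y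

/-- Applying a finite sequence of topplings (given as a list of sites). -/
def applySeq (G : SimpleGraph S) [DecidableRel G.Adj] (V : Finset S) :
    (S → ℕ) → List S → (S → ℕ)
  | η, [] => η
  | η, x :: L => applySeq G V (toppleAt G V η x) L

/-- A list of sites is a legal toppling sequence from `η`: each toppled site lies in
`V` and has height `> 3` at the moment it is toppled. -/
def LegalSeq (G : SimpleGraph S) [DecidableRel G.Adj] (V : Finset S) :
    (S → ℕ) → List S → Prop
  | _, [] => True
  | η, x :: L => x ∈ V ∧ 3 < η x ∧ LegalSeq G V (toppleAt G V η x) L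

/-- `η` is stable on `V`: all heights in `V` are at most 3. -/
def Stable (V : Finset S) (η : S → ℕ) : Prop := ∀ x ∈ V, η x ≤ 3

/-- `η` is a stable configuration on `V`: heights in `V` lie in `{1,2,3}`. -/
def StableConfig (V : Finset S) (η : S → ℕ) : Prop := ∀ x ∈ V, 1 ≤ η x ∧ η x ≤ 3

/-- `ζ` is a stabilization of `η` in `V`: it is reached from `η` by a finite legal
sequence of topplings and is stable. -/
def Stabilizes (G : SimpleGraph S) [DecidableRel G.Adj] (V : Finset S)
    (η ζ : S → ℕ) : Prop :=
  ∃ L : List S, LegalSeq G V η L ∧ applySeq G V η L = ζ ∧ Stable V ζ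

open scoped Classical in
/-- The stabilization map `𝒯` (well defined since stabilization exists and is
unique, by the abelian property). -/
noncomputable def stabilize (G : SimpleGraph S) [DecidableRel G.Adj] (V : Finset S)
    (η : S → ℕ) : S → ℕ :=
  if h : ∃ ζ, Stabilizes G V η ζ then h.choose else η

/-- Adding one grain at `x`. -/
def addGrain (x : S) (η : S → ℕ) : S → ℕ := Function.update η x (η x + 1)

/-- The addition operator `a_{x,V}`: add one grain at `x` and stabilize in `V`. -/
noncomputable def addOp (G : SimpleGraph S) [DecidableRel G.Adj] (V : Finset S)
    (x : S) (η : S → ℕ) : S → ℕ :=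
  stabilize G V (addGrain x η)

/-- `η` contains a forbidden subconfiguration in `V`: there is a nonempty `W ⊆ V`
such that every `x ∈ W` has height at most the number of its neighbours in `W`. -/
def HasFSC (G : SimpleGraph S) [DecidableRel G.Adj] (V : Finset S)
    (η : S → ℕ) : Prop :=
  ∃ W : Finset S, W ⊆ V ∧ W.Nonempty ∧
    ∀ x ∈ W, η x ≤ (W.filter (fun y => y ≠ x ∧ G.Adj x y)).card

/-- `η` is an allowed stable configuration on `V`. -/
def Allowed (G : SimpleGraph S) [DecidableRel G.Adj] (V : Finset S)
    (η : S → ℕ) : Prop :=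
  StableConfig V η ∧ ¬ HasFSC G V η

/-- `η` is an allowed stable configuration on `V`, padded with height 1 outside `V`
(a canonical representative, used for counting and summing over `𝒜_V`). -/
def AllowedExt (G : SimpleGraph S) [DecidableRel G.Adj] (V : Finset S)
    (η : S → ℕ) : Prop :=
  Allowed G V η ∧ ∀ x ∉ V, η x = 1

/-- The expectation of `f` under the uniform measure on the (finite) set `A`. -/
noncomputable def expectOn (A : Set (S → ℕ)) (f : (S → ℕ) → ℝ) : ℝ :=
  (∑ᶠ η ∈ A, f η) / (A.ncard : ℝ)

/-- Adding one new vertex `x` with exactly one neighbour in `V`: the difference of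
expectations of a local function `f` under the uniform measures on `𝒜_{V∪{x}}` and
`𝒜_V` is bounded by the truncated correlation of `f` with the event `{ζ x = 3}`
divided by the probability of that event. -/

lemma exists_deg_le_two (G : SimpleGraph S) [DecidableRel G.Adj] (hG : IsBinaryTree G)
    (W : Finset S) (hW : W.Nonempty) :
    ∃ u ∈ W, (W.filter (fun y => y ≠ u ∧ G.Adj u y)).card ≤ 2 := by
  by_contra h
  push_neg at h
  have hclosed : ∀ u ∈ W, ∀ y, G.Adj u y → y ∈ W := by
    intro u hu y hy
    have h3 : 3 ≤ (W.filter (fun y => y ≠ u ∧ G.Adj u y)).card := h u hu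
    have hnb : {w : S | G.Adj u w}.ncard = 3 := hG.2.2 u
    have hfin : {w : S | G.Adj u w}.Finite := by
      apply Set.finite_of_ncard_ne_zero; omega
    have hsub : W.filter (fun y => y ≠ u ∧ G.Adj u y) ⊆ hfin.toFinset := by
      intro z hz
      simp only [Finset.mem_filter] at hz
      simp only [Set.Finite.mem_toFinset, Set.mem_setOf_eq]
      exact hz.2.2
    have hcard : hfin.toFinset.card = 3 := by
      rw [← Set.ncard_eq_toFinset_card _ hfin]; exact hnb
    have heq : W.filter (fun y => y ≠ u ∧ G.Adj u y) = hfin.toFinset :=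
      Finset.eq_of_subset_of_card_le hsub (by omega)
    have : y ∈ W.filter (fun y => y ≠ u ∧ G.Adj u y) := by
      rw [heq]; simp only [Set.Finite.mem_toFinset, Set.mem_setOf_eq]; exact hy
    exact (Finset.mem_filter.mp this).1
  obtain ⟨w₀, hw₀⟩ := hW
  have step : ∀ (u v : S) (p : G.Walk u v), u ∈ W → v ∈ W := by
    intro u v p
    induction p with
    | nil => exact id
    | cons h p ih => exact fun ha => ih (hclosed _ ha _ h)
  have hall : ∀ v : S, v ∈ W := fun v => step w₀ v (hG.1.preconnected w₀ v).some hw₀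
  have hfinS : Finite S :=
    Set.finite_univ_iff.mp (W.finite_toSet.subset (fun v _ => hall v))
  haveI : Fintype S := Fintype.ofFinite S
  have htree : G.IsTree := ⟨hG.1, hG.2.1⟩
  haveI : Fintype G.edgeSet := Fintype.ofFinite _
  have hedge := htree.card_edgeFinset
  have hdeg : ∀ v : S, G.degree v = 3 := by
    intro v
    have h1 := hG.2.2 v
    rw [Set.ncard_eq_toFinset_card'] at h1
    rw [← h1]
    congr 1
  have hsum := G.sum_degrees_eq_twice_card_edges
  rw [Finset.sum_congr rfl (fun v _ => hdeg v), Finset.sum_const, smul_eq_mul] at hsum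
  have hpos : 0 < Fintype.card S := Fintype.card_pos_iff.mpr ⟨w₀⟩
  simp only [Finset.card_univ] at hsum
  simp only [SimpleGraph.edgeFinset] at hedge hsum
  rw [← Set.ncard_eq_toFinset_card'] at hedge hsum
  omega

lemma allowedExt_const (G : SimpleGraph S) [DecidableRel G.Adj] (hG : IsBinaryTree G)
    (V : Finset S) : AllowedExt G V (fun y => if y ∈ V then 3 else 1) := by
  refine ⟨⟨fun y hy => by simp [hy], ?_⟩, fun y hy => by simp [hy]⟩
  rintro ⟨W, hWV, hWne, hW⟩
  obtain ⟨u, hu, hle⟩ := exists_deg_le_two G hG W hWne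
  have h1 := hW u hu
  simp only [hWV hu, if_pos] at h1
  omega

lemma allowedExt_finite (G : SimpleGraph S) [DecidableRel G.Adj] (V : Finset S) :
    {η | AllowedExt G V η}.Finite := by
  have hsub : {η | AllowedExt G V η} ⊆
      (fun g : (V → Fin 3) => fun y : S => if h : y ∈ V then (g ⟨y, h⟩ : ℕ) + 1 else 1) ''
        Set.univ := by
    intro η hη
    have hb : ∀ v : S, v ∈ V → η v - 1 < 3 := by
      intro v hv; have := hη.1.1 v hv; omega
    refine ⟨fun v => ⟨η v - 1, hb v v.2⟩, trivial, ?_⟩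
    funext y
    by_cases h : y ∈ V
    · simp only [h, dif_pos]
      have := hη.1.1 y h
      omega
    · simp only [h, dif_neg, not_false_iff]
      exact (hη.2 y h).symm
  exact (Set.finite_univ.image _).subset hsub

lemma restrict_allowed (G : SimpleGraph S) [DecidableRel G.Adj] (V : Finset S) (x : S)
    (hx : x ∉ V) (ζ : S → ℕ) (hζ : AllowedExt G (insert x V) ζ) :
    AllowedExt G V (Function.update ζ x 1) := by
  obtain ⟨⟨hst, hfsc⟩, hpad⟩ := hζ
  have hupd : ∀ v ∈ V, Function.update ζ x 1 v = ζ v := by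
    intro v hv
    have : v ≠ x := fun h => hx (h ▸ hv)
    exact Function.update_of_ne this _ _
  refine ⟨⟨fun v hv => by rw [hupd v hv]; exact hst v (mem_insert_of_mem hv), ?_⟩, ?_⟩
  · rintro ⟨W, hWV, hWne, hW⟩
    refine hfsc ⟨W, hWV.trans (subset_insert x V), hWne, fun u hu => ?_⟩
    rw [← hupd u (hWV hu)]
    exact hW u hu
  · intro y hy
    by_cases h : y = x
    · subst h; simp
    · rw [Function.update_of_ne h]
      exact hpad y (by simp [h, hy])

lemma extend_allowed (G : SimpleGraph S) [DecidableRel G.Adj] (V : Finset S) (x : S)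
    (hx : x ∉ V) (hnb : (V.filter (fun y => G.Adj x y)).card = 1) (η : S → ℕ)
    (hη : AllowedExt G V η) :
    AllowedExt G (insert x V) (Function.update η x 3) := by
  obtain ⟨⟨hst, hfsc⟩, hpad⟩ := hη
  have hupd : ∀ v ∈ V, Function.update η x 3 v = η v := by
    intro v hv
    have : v ≠ x := fun h => hx (h ▸ hv)
    exact Function.update_of_ne this _ _
  refine ⟨⟨?_, ?_⟩, ?_⟩
  · intro v hv
    rcases Finset.mem_insert.mp hv with h | h
    · subst h; simp
    · rw [hupd v h]; exact hst v h
  · rintro ⟨W, hWV, hWne, hW⟩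
    by_cases hxW : x ∈ W
    · have h1 := hW x hxW
      rw [Function.update_self] at h1
      have hsub : W.filter (fun y => y ≠ x ∧ G.Adj x y) ⊆ V.filter (fun y => G.Adj x y) := by
        intro z hz
        simp only [Finset.mem_filter] at hz ⊢
        have hzV : z ∈ V := by
          rcases Finset.mem_insert.mp (hWV hz.1) with h | h
          · exact absurd h hz.2.1
          · exact h
        exact ⟨hzV, hz.2.2⟩
      have := Finset.card_le_card hsub
      omega
    · apply hfsc
      refine ⟨W, ?_, hWne, ?_⟩
      · intro z hz
        rcases Finset.mem_insert.mp (hWV hz) with h | h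
        · exact absurd (h ▸ hz) hxW
        · exact h
      · intro u hu
        have huV : u ∈ V := by
          rcases Finset.mem_insert.mp (hWV hu) with h | h
          · exact absurd (h ▸ hu) hxW
          · exact h
        rw [← hupd u huV]
        exact hW u hu
  · intro y hy
    have hyx : y ≠ x := fun h => hy (h ▸ mem_insert_self x V)
    rw [Function.update_of_ne hyx]
    exact hpad y (fun h => hy (mem_insert_of_mem h))

lemma AV_eq_image (G : SimpleGraph S) [DecidableRel G.Adj] (V : Finset S) (x : S)
    (hx : x ∉ V) (hnb : (V.filter (fun y => G.Adj x y)).card = 1) :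
    {η | AllowedExt G V η} =
      (fun ζ => Function.update ζ x 1) ''
        {ζ | AllowedExt G (insert x V) ζ ∧ ζ x = 3} := by
  ext η
  constructor
  · intro hη
    refine ⟨Function.update η x 3, ⟨extend_allowed G V x hx hnb η hη, by simp⟩, ?_⟩
    funext y
    by_cases h : y = x
    · subst h
      simp only [Function.update_self]
      exact (hη.2 y hx).symm  -- careful: need η x = 1; y = x here
    · simp [Function.update_of_ne h]
  · rintro ⟨ζ, ⟨hζ, h3⟩, rfl⟩
    exact restrict_allowed G V x hx ζ hζ

lemma injOn_update (G : SimpleGraph S) [DecidableRel G.Adj] (V : Finset S) (x : S) :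
    Set.InjOn (fun ζ : S → ℕ => Function.update ζ x 1)
      {ζ | AllowedExt G (insert x V) ζ ∧ ζ x = 3} := by
  rintro ζ ⟨_, h3⟩ ζ' ⟨_, h3'⟩ heq
  funext y
  by_cases h : y = x
  · subst h; rw [h3, h3']
  · have := congrFun heq y
    simpa [Function.update_of_ne h] using this

lemma final_algebra (Sb Sf : ℝ) (n N : ℝ) (hn : 0 < n) (hN : n ≤ N) :
    |Sf / N - Sb / n| ≤ |Sb / N - Sf / N * (n / N)| / (n / N) := by
  have hN0 : 0 < N := lt_of_lt_of_le hn hN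
  have key : Sb / N - Sf / N * (n / N) = (n / N) * (Sb / n - Sf / N) := by
    field_simp
  have hq : 0 < n / N := div_pos hn hN0
  rw [key, abs_mul, abs_of_pos hq, mul_comm, mul_div_assoc, div_self (ne_of_gt hq),
    mul_one, abs_sub_comm]


theorem expect_diff_le_truncated_correlation (G : SimpleGraph S) [DecidableRel G.Adj]
    (hG : IsBinaryTree G) (V : Finset S) (hV : V.Nonempty)
    (x : S) (hx : x ∉ V) (hnb : (V.filter (fun y => G.Adj x y)).card = 1)
    (f : (S → ℕ) → ℝ) (hf : ∀ η ζ : S → ℕ, (∀ v ∈ V, η v = ζ v) → f η = f ζ) :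
    |expectOn {ζ | AllowedExt G (insert x V) ζ} f -
        expectOn {η | AllowedExt G V η} f| ≤
      |expectOn {ζ | AllowedExt G (insert x V) ζ}
            (fun ζ => f ζ * (if ζ x = 3 then (1 : ℝ) else 0)) -
          expectOn {ζ | AllowedExt G (insert x V) ζ} f *
            (({ζ | AllowedExt G (insert x V) ζ ∧ ζ x = 3}.ncard : ℝ) /
              ({ζ | AllowedExt G (insert x V) ζ}.ncard : ℝ))| /
        (({ζ | AllowedExt G (insert x V) ζ ∧ ζ x = 3}.ncard : ℝ) /
          ({ζ | AllowedExt G (insert x V) ζ}.ncard : ℝ)) := by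
  set AW : Set (S → ℕ) := {ζ | AllowedExt G (insert x V) ζ} with hAW
  set B : Set (S → ℕ) := {ζ | AllowedExt G (insert x V) ζ ∧ ζ x = 3} with hB
  set AV : Set (S → ℕ) := {η | AllowedExt G V η} with hAV
  have hAWfin : AW.Finite := allowedExt_finite G (insert x V)
  have hBsub : B ⊆ AW := fun ζ hζ => hζ.1
  have hBfin : B.Finite := hAWfin.subset hBsub
  -- B is nonempty
  have hBne : B.Nonempty := by
    have h1 := allowedExt_const G hG V
    refine ⟨Function.update (fun y => if y ∈ V then 3 else 1) x 3,
      extend_allowed G V x hx hnb _ h1, by simp⟩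
  -- counting
  have hinj := injOn_update G V x
  have himg := AV_eq_image G V x hx hnb
  have hAVcard : AV.ncard = B.ncard := by
    rw [hAV, himg, Set.ncard_image_of_injOn hinj]
  -- sums
  have hsumAV : ∑ᶠ η ∈ AV, f η = ∑ᶠ ζ ∈ B, f ζ := by
    rw [hAV, himg, finsum_mem_image hinj]
    apply finsum_mem_congr rfl
    intro ζ hζ
    apply hf
    intro v hv
    have : v ≠ x := fun h => hx (h ▸ hv)
    simp [Function.update_of_ne this]
  -- indicator sum
  have hTB : hBfin.toFinset = hAWfin.toFinset.filter (fun ζ => ζ x = 3) := by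
    ext ζ
    simp [hB, hAW, Set.Finite.mem_toFinset, and_comm]
  have hsumInd : ∑ᶠ ζ ∈ AW, f ζ * (if ζ x = 3 then (1 : ℝ) else 0) = ∑ᶠ ζ ∈ B, f ζ := by
    rw [← hAWfin.coe_toFinset, finsum_mem_coe_finset, ← hBfin.coe_toFinset,
      finsum_mem_coe_finset, hTB, Finset.sum_filter]
    apply Finset.sum_congr rfl
    intro ζ _
    by_cases h : ζ x = 3 <;> simp [h]
  -- the numbers
  set n := B.ncard with hn
  set N := AW.ncard with hN
  have hnpos : 0 < n := (Set.ncard_pos hBfin).mpr hBne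
  have hnN : n ≤ N := Set.ncard_le_ncard hBsub hAWfin
  set Sf : ℝ := ∑ᶠ ζ ∈ AW, f ζ with hSf
  set Sb : ℝ := ∑ᶠ ζ ∈ B, f ζ with hSb
  have e1 : expectOn AW f = Sf / (N : ℝ) := rfl
  have e2 : expectOn AV f = Sb / (n : ℝ) := by
    rw [expectOn, hsumAV, hAVcard]
  have e3 : expectOn AW (fun ζ => f ζ * (if ζ x = 3 then (1 : ℝ) else 0)) = Sb / (N : ℝ) := by
    rw [expectOn, hsumInd]
  rw [e1, e2, e3]
  exact final_algebra Sb Sf n N (by exact_mod_cast hnpos) (by exact_mod_cast hnN)
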